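/- arXiv:0902.2125 — 2 statements merged into one kernel-verified Lean document; each statement's English description precedes it below -/
import Mathlib

section
/- Let θ be a formula of L such that there exists a CMAEHS for θ. Then θ is satisfiable in a pseudo-CMAEM. -/
open Classical

/-- A coalition: a nonempty set of agents. -/
abbrev Coalition (Agent : Type) := {A : Set Agent // A.Nonempty}

/-- The singleton coalition `{a}`. -/
def single {Agent : Type} (a : Agent) : Coalition Agent :=
  ⟨{a}, Set.singleton_nonempty a⟩

/-- Formulas of the language `L`:
`φ ::= p | ¬φ | φ₁ ∧ φ₂ | D_A φ | C_A φ` with `A` a nonempty coalition. -/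
inductive Formula (Agent AP : Type) : Type
  | atom : AP → Formula Agent AP
  | neg  : Formula Agent AP → Formula Agent AP
  | and  : Formula Agent AP → Formula Agent AP → Formula Agent AP
  | D    : Coalition Agent → Formula Agent AP → Formula Agent AP
  | C    : Coalition Agent → Formula Agent AP → Formula Agent AP

/-- A coalitional multiagent epistemic structure (CMAES): a nonempty set of
states with relations `R^D_A` and `R^C_A` for every nonempty coalition `A`,
where `R^C_A` is the reflexive transitive closure of the union of the
relations `R^D_{A'}` over all nonempty `A' ⊆ A`. -/
structure CMAES (Agent : Type) where
  State : Type
  state_nonempty : Nonempty State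
  RD : Coalition Agent → State → State → Prop
  RC : Coalition Agent → State → State → Prop
  RC_eq : ∀ A : Coalition Agent, RC A =
    Relation.ReflTransGen (fun s t => ∃ A' : Coalition Agent, A'.1 ⊆ A.1 ∧ RD A' s t)

/-- A pseudo-CMAEF: every `R^D_A` is an equivalence relation and
`R^D_A ⊆ R^D_B` whenever `∅ ≠ B ⊆ A`. -/
def CMAES.IsPseudoFrame {Agent : Type} (G : CMAES Agent) : Prop :=
  (∀ A : Coalition Agent, Equivalence (G.RD A)) ∧
  (∀ A B : Coalition Agent, B.1 ⊆ A.1 → ∀ s t, G.RD A s t → G.RD B s t)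

/-- A (genuine) CMAEF: every `R^D_A` is an equivalence relation and
`R^D_A = ⋂_{a ∈ A} R^D_{{a}}`. -/
def CMAES.IsFrame {Agent : Type} (G : CMAES Agent) : Prop :=
  (∀ A : Coalition Agent, Equivalence (G.RD A)) ∧
  (∀ (A : Coalition Agent) (s t : G.State), G.RD A s t ↔ ∀ a ∈ A.1, G.RD (single a) s t)

/-- A CMAES equipped with a labeling of states by sets of atomic propositions. -/
structure CMAEModel (Agent AP : Type) extends CMAES Agent where
  label : State → Set AP

/-- The satisfaction relation. -/
def CMAEModel.Sat {Agent AP : Type} (M : CMAEModel Agent AP) :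
    Formula Agent AP → M.State → Prop
  | .atom p, s => p ∈ M.label s
  | .neg φ, s => ¬ M.Sat φ s
  | .and φ ψ, s => M.Sat φ s ∧ M.Sat ψ s
  | .D A φ, s => ∀ t, M.RD A s t → M.Sat φ t
  | .C A φ, s => ∀ t, M.RC A s t → M.Sat φ t

/-- `M` is a pseudo-CMAEM. -/
def CMAEModel.IsPseudo {Agent AP : Type} (M : CMAEModel Agent AP) : Prop :=
  M.toCMAES.IsPseudoFrame

/-- `M` is a (genuine) CMAEM. -/
def CMAEModel.IsGenuine {Agent AP : Type} (M : CMAEModel Agent AP) : Prop :=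
  M.toCMAES.IsFrame

/-- `θ` is satisfiable in a pseudo-CMAEM. -/
def SatisfiableInPseudo (Agent AP : Type) (θ : Formula Agent AP) : Prop :=
  ∃ M : CMAEModel Agent AP, M.IsPseudo ∧ ∃ s : M.State, M.Sat θ s

/-- `θ` is satisfiable in a CMAEM. -/
def SatisfiableInCMAEM (Agent AP : Type) (θ : Formula Agent AP) : Prop :=
  ∃ M : CMAEModel Agent AP, M.IsGenuine ∧ ∃ s : M.State, M.Sat θ s
/-- A set of formulas is fully expanded. -/
def FullyExpanded {Agent AP : Type} (Δ : Set (Formula Agent AP)) : Prop :=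
  (∀ φ, Formula.neg (Formula.neg φ) ∈ Δ → φ ∈ Δ) ∧
  (∀ φ ψ, Formula.and φ ψ ∈ Δ → φ ∈ Δ ∧ ψ ∈ Δ) ∧
  (∀ φ ψ, Formula.neg (Formula.and φ ψ) ∈ Δ → Formula.neg φ ∈ Δ ∨ Formula.neg ψ ∈ Δ) ∧
  (∀ (A A' : Coalition Agent) (φ : Formula Agent AP),
      Formula.D A φ ∈ Δ → A.1 ⊆ A'.1 → Formula.D A' φ ∈ Δ) ∧
  (∀ (A : Coalition Agent) (φ : Formula Agent AP), Formula.D A φ ∈ Δ → φ ∈ Δ) ∧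
  (∀ (A : Coalition Agent) (φ : Formula Agent AP), Formula.C A φ ∈ Δ →
      ∀ a ∈ A.1, Formula.D (single a) (Formula.and φ (Formula.C A φ)) ∈ Δ) ∧
  (∀ (A : Coalition Agent) (φ : Formula Agent AP), Formula.neg (Formula.C A φ) ∈ Δ →
      ∃ a ∈ A.1, Formula.neg (Formula.D (single a) (Formula.and φ (Formula.C A φ))) ∈ Δ) ∧
  (∀ (A B : Coalition Agent) (φ : Formula Agent AP) (h : (A.1 ∩ B.1).Nonempty),
      Formula.neg (Formula.D A (Formula.neg (Formula.D B φ))) ∈ Δ →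
      Formula.D ⟨A.1 ∩ B.1, h⟩ φ ∈ Δ)

/-- `H` is a Hintikka labeling of the CMAES `G`, i.e. `(G, H)` is a CMAEHS:
conditions (H1)-(H5). -/
def IsHintikka {Agent AP : Type} (G : CMAES Agent)
    (H : G.State → Set (Formula Agent AP)) : Prop :=
  (∀ s φ, Formula.neg φ ∈ H s → φ ∉ H s) ∧
  (∀ s, FullyExpanded (H s)) ∧
  (∀ s (A : Coalition Agent) φ, Formula.neg (Formula.D A φ) ∈ H s →
      ∃ t, G.RD A s t ∧ Formula.neg φ ∈ H t) ∧
  (∀ s t (A : Coalition Agent), G.RD A s t →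
      ∀ A' : Coalition Agent, A'.1 ⊆ A.1 →
      ∀ φ, (Formula.D A' φ ∈ H s ↔ Formula.D A' φ ∈ H t)) ∧
  (∀ s (A : Coalition Agent) φ, Formula.neg (Formula.C A φ) ∈ H s →
      ∃ t, G.RC A s t ∧ Formula.neg φ ∈ H t)

/-- There exists a coalitional multiagent epistemic Hintikka structure for `θ`. -/
def ExistsHintikkaFor (Agent AP : Type) (θ : Formula Agent AP) : Prop :=
  ∃ (G : CMAES Agent) (H : G.State → Set (Formula Agent AP)),
    IsHintikka G H ∧ ∃ s : G.State, θ ∈ H s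
/-- The pseudo-model built from a Hintikka structure: `R^D_A` is replaced by
the equivalence closure of the union of `R^D_{A'}` over supersets `A'` of `A`. -/
def pseudoModel {Agent AP : Type} (G : CMAES Agent)
    (H : G.State → Set (Formula Agent AP)) : CMAEModel Agent AP where
  State := G.State
  state_nonempty := G.state_nonempty
  RD A := Relation.EqvGen (fun s t => ∃ A' : Coalition Agent, A.1 ⊆ A'.1 ∧ G.RD A' s t)
  RC A := Relation.ReflTransGen (fun s t => ∃ A' : Coalition Agent, A'.1 ⊆ A.1 ∧
    Relation.EqvGen (fun s t => ∃ A'' : Coalition Agent, A'.1 ⊆ A''.1 ∧ G.RD A'' s t) s t)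
  RC_eq A := rfl
  label s := {p | Formula.atom p ∈ H s}

/-- If there exists a CMAEHS for `θ`, then `θ` is satisfiable
in a pseudo-CMAEM. -/
theorem hintikka_to_pseudo {Agent AP : Type} [Fintype Agent] [Nonempty Agent]
    (θ : Formula Agent AP) (h : ExistsHintikkaFor Agent AP θ) :
    SatisfiableInPseudo Agent AP θ := by
  obtain ⟨G, H, ⟨h1, h2, h3, h4, h5⟩, s0, hθ⟩ := h
  set M : CMAEModel Agent AP := pseudoModel G H with hM
  -- invariance of `D` formulas along the new relations
  have inv : ∀ (A : Coalition Agent) (s t : G.State), M.RD A s t →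
      ∀ (B : Coalition Agent), B.1 ⊆ A.1 → ∀ φ,
      (Formula.D B φ ∈ H s ↔ Formula.D B φ ∈ H t) := by
    intro A s t hst
    induction hst with
    | rel s t hr =>
      intro B hB φ
      obtain ⟨A', hAA', hRD⟩ := hr
      exact h4 s t A' hRD B (hB.trans hAA') φ
    | refl => exact fun B _ φ => Iff.rfl
    | symm a b _ ih => exact fun B hB φ => (ih B hB φ).symm
    | trans a b c _ _ ih1 ih2 => exact fun B hB φ => (ih1 B hB φ).trans (ih2 B hB φ)
  -- `C_A φ` membership propagates along the new `R^C_A`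
  have Cprop : ∀ (A : Coalition Agent) (φ : Formula Agent AP) (u v : G.State),
      M.RC A u v → Formula.C A φ ∈ H u → Formula.C A φ ∈ H v := by
    intro A φ u v huv
    induction huv with
    | refl => exact id
    | tail _ hedge ih =>
      intro hC
      have hC' := ih hC
      obtain ⟨A', hsub, hRD'⟩ := hedge
      obtain ⟨a, ha⟩ := A'.2
      have hD := (h2 _).2.2.2.2.2.1 A φ hC' a (hsub ha)
      have hsing : (single a).1 ⊆ A'.1 := by
        intro x hx; rcases hx with rfl; exact ha
      have hDv := ((inv A' _ _ hRD' (single a) hsing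
        (Formula.and φ (Formula.C A φ)))).mp hD
      have hand := (h2 _).2.2.2.2.1 (single a) _ hDv
      exact ((h2 _).2.1 _ _ hand).2
  -- from `C_A φ ∈ H v` we get `φ ∈ H v`
  have CT : ∀ (A : Coalition Agent) (φ : Formula Agent AP) (v : G.State),
      Formula.C A φ ∈ H v → φ ∈ H v := by
    intro A φ v hC
    obtain ⟨a, ha⟩ := A.2
    have hD := (h2 v).2.2.2.2.2.1 A φ hC a ha
    have hand := (h2 v).2.2.2.2.1 _ _ hD
    exact ((h2 v).2.1 _ _ hand).1
  -- the truth lemma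
  have main : ∀ (φ : Formula Agent AP) (s : G.State),
      (φ ∈ H s → M.Sat φ s) ∧ (Formula.neg φ ∈ H s → ¬ M.Sat φ s) := by
    intro φ
    induction φ with
    | atom p =>
      intro s
      exact ⟨fun hp => hp, fun hn hsat => h1 s _ hn hsat⟩
    | neg φ ih =>
      intro s
      refine ⟨fun hnφ => (ih s).2 hnφ, fun hnn hsat => ?_⟩
      exact hsat ((ih s).1 ((h2 s).1 φ hnn))
    | and φ ψ ihφ ihψ =>
      intro s
      constructor
      · intro hand
        obtain ⟨hφ, hψ⟩ := (h2 s).2.1 _ _ hand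
        exact ⟨(ihφ s).1 hφ, (ihψ s).1 hψ⟩
      · intro hn hsat
        rcases (h2 s).2.2.1 _ _ hn with hnφ | hnψ
        · exact (ihφ s).2 hnφ hsat.1
        · exact (ihψ s).2 hnψ hsat.2
    | D A φ ih =>
      intro s
      constructor
      · intro hD t ht
        have hDt := (inv A s t ht A (fun _ hx => hx) φ).mp hD
        exact (ih t).1 ((h2 t).2.2.2.2.1 A φ hDt)
      · intro hn hsat
        obtain ⟨t, hRD, hnφ⟩ := h3 s A φ hn
        have hRD' : M.RD A s t :=
          Relation.EqvGen.rel _ _ ⟨A, fun _ hx => hx, hRD⟩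
        exact (ih t).2 hnφ (hsat t hRD')
    | C A φ ih =>
      intro s
      constructor
      · intro hC t ht
        exact (ih t).1 (CT A φ t (Cprop A φ s t ht hC))
      · intro hn hsat
        obtain ⟨t, hRC, hnφ⟩ := h5 s A φ hn
        rw [G.RC_eq] at hRC
        have hRC' : M.RC A s t := by
          refine Relation.ReflTransGen.mono (fun u v hr => ?_) _ _ hRC
          obtain ⟨A', hsub, hRD⟩ := hr
          exact ⟨A', hsub, Relation.EqvGen.rel _ _ ⟨A', fun _ hx => hx, hRD⟩⟩
        exact (ih t).2 hnφ (hsat t hRC')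
  refine ⟨M, ⟨fun A => Relation.EqvGen.is_equivalence _, ?_⟩, s0, (main θ s0).1 hθ⟩
  intro A B hBA s t hst
  exact Relation.EqvGen.mono (fun u v ⟨A', hAA', hRD⟩ => ⟨A', hBA.trans hAA', hRD⟩) _ _ hst
end

section
/- A formula θ of L is satisfiable in a CMAEM if and only if it is satisfiable in a pseudo-CMAEM. -/
open Classical

/-! ### Auxiliary development: unraveling a pseudo-CMAEM into a genuine CMAEM -/

/-- Histories: finite paths starting at a base state, with each step labeled by
a coalition. -/
inductive Hist (Agent σ : Type) : Type
  | base : σ → Hist Agent σ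
  | step : Hist Agent σ → Coalition Agent → σ → Hist Agent σ

namespace Hist

variable {Agent σ : Type}

/-- The last state of a history. -/
def last : Hist Agent σ → σ
  | base s => s
  | step _ _ t => t

/-- The depth (number of steps) of a history. -/
def depth : Hist Agent σ → ℕ
  | base _ => 0
  | step h _ _ => h.depth + 1

/-- The highest ancestor of `h` reachable by going up only along edges whose
label contains `a`. -/
noncomputable def anc (a : Agent) : Hist Agent σ → Hist Agent σ
  | base s => base s
  | step h A t => if a ∈ A.1 then anc a h else step h A t

@[simp] lemma anc_base (a : Agent) (s : σ) : anc a (base s) = base s := by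
  simp [anc]

@[simp] lemma anc_step_mem {a : Agent} {A : Coalition Agent} (h : Hist Agent σ) (t : σ)
    (ha : a ∈ A.1) : anc a (step h A t) = anc a h := by
  simp [anc, ha]

@[simp] lemma anc_step_not_mem {a : Agent} {A : Coalition Agent} (h : Hist Agent σ) (t : σ)
    (ha : a ∉ A.1) : anc a (step h A t) = step h A t := by
  simp [anc, ha]

/-- Prefix (ancestor) relation on histories. -/
def IsPrefix (g h : Hist Agent σ) : Prop :=
  Relation.ReflTransGen (fun x y => ∃ A t, y = step x A t) g h

lemma anc_isPrefix (a : Agent) : ∀ h : Hist Agent σ, IsPrefix (anc a h) h := by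
  intro h
  induction h with
  | base s => exact Relation.ReflTransGen.refl
  | step g A t ih =>
    by_cases ha : a ∈ A.1
    · rw [anc_step_mem _ _ ha]; exact ih.tail ⟨A, t, rfl⟩
    · rw [anc_step_not_mem _ _ ha]; exact Relation.ReflTransGen.refl

lemma isPrefix_depth_le {g h : Hist Agent σ} (hp : IsPrefix g h) : g.depth ≤ h.depth := by
  induction hp with
  | refl => exact le_rfl
  | tail _ hstep ih =>
    obtain ⟨A, t, rfl⟩ := hstep
    exact ih.trans (Nat.le_succ _)

lemma isPrefix_eq_of_depth_le {g h : Hist Agent σ} (hp : IsPrefix g h)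
    (hd : h.depth ≤ g.depth) : g = h := by
  induction hp with
  | refl => rfl
  | @tail x y hgx hstep ih =>
    obtain ⟨A, t, rfl⟩ := hstep
    exfalso
    have h1 := isPrefix_depth_le hgx
    simp [depth] at hd
    omega

end Hist

section Unravel

variable {Agent AP : Type} (M : CMAEModel Agent AP)

/-- Validity of a history: each step is an `R^D`-step in `M`. -/
def MValid : Hist Agent M.State → Prop
  | .base _ => True
  | .step h A t => MValid h ∧ M.RD A h.last t

variable {M}

/-- Key lemma: in the tree, if for every `a ∈ A` the `a`-roots of two valid
histories agree, then their last states are `R^D_A`-related in `M`. -/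
lemma rd_of_anc_eq (hp : M.IsPseudo) (n : ℕ) :
    ∀ (A : Coalition Agent) (h h' : Hist Agent M.State),
      MValid M h → MValid M h' → h.depth + h'.depth ≤ n →
      (∀ a ∈ A.1, h.anc a = h'.anc a) → M.RD A h.last h'.last := by
  induction n with
  | zero =>
    intro A h h' _ _ hd hanc
    obtain ⟨a, ha⟩ := A.2
    match h, h' with
    | .base s, .base s' =>
      have := hanc a ha
      simp [Hist.anc_base, Hist.anc_step_mem, Hist.anc_step_not_mem] at this
      subst this
      exact (hp.1 A).refl _
    | .step _ _ _, _ => simp [Hist.depth] at hd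
    | .base _, .step _ _ _ => simp [Hist.depth] at hd
  | succ n ih =>
    intro A h h' hv hv' hd hanc
    by_cases heq : h = h'
    · subst heq; exact (hp.1 A).refl _
    -- peelability
    by_cases hpeel' : ∃ g B t, h' = Hist.step g B t ∧ A.1 ⊆ B.1
    · obtain ⟨g, B, t, rfl, hAB⟩ := hpeel'
      obtain ⟨hvg, hrd⟩ := hv'
      have hanc' : ∀ a ∈ A.1, h.anc a = g.anc a := by
        intro a ha
        have := hanc a ha
        simpa [Hist.anc_base, Hist.anc_step_mem, Hist.anc_step_not_mem, hAB ha] using this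
      have h1 : M.RD A h.last g.last := by
        apply ih A h g hv hvg _ hanc'
        simp [Hist.depth] at hd; omega
      exact (hp.1 A).trans h1 (hp.2 B A hAB _ _ hrd)
    by_cases hpeel : ∃ g B t, h = Hist.step g B t ∧ A.1 ⊆ B.1
    · obtain ⟨g, B, t, rfl, hAB⟩ := hpeel
      obtain ⟨hvg, hrd⟩ := hv
      have hanc' : ∀ a ∈ A.1, g.anc a = h'.anc a := by
        intro a ha
        have := hanc a ha
        simpa [Hist.anc_base, Hist.anc_step_mem, Hist.anc_step_not_mem, hAB ha] using this
      have h1 : M.RD A g.last h'.last := by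
        apply ih A g h' hvg hv' _ hanc'
        simp [Hist.depth] at hd; omega
      exact (hp.1 A).trans ((hp.1 A).symm (hp.2 B A hAB _ _ hrd)) h1
    -- neither peelable: contradiction
    exfalso
    -- analyze h
    match h, h' with
    | .base s, .base s' =>
      obtain ⟨a, ha⟩ := A.2
      have := hanc a ha
      simp [Hist.anc_base, Hist.anc_step_mem, Hist.anc_step_not_mem] at this
      exact heq (by rw [this])
    | .base s, .step g' B' t' =>
      -- h' is a step, not peelable: some a₀ ∈ A with a₀ ∉ B'
      have : ∃ a₀ ∈ A.1, a₀ ∉ B'.1 := by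
        by_contra hc
        push_neg at hc
        exact hpeel' ⟨g', B', t', rfl, hc⟩
      obtain ⟨a₀, ha₀, hnb⟩ := this
      have := hanc a₀ ha₀
      simp [Hist.anc_base, Hist.anc_step_mem, Hist.anc_step_not_mem, hnb] at this
    | .step g B t, .base s' =>
      have : ∃ a₀ ∈ A.1, a₀ ∉ B.1 := by
        by_contra hc
        push_neg at hc
        exact hpeel ⟨g, B, t, rfl, hc⟩
      obtain ⟨a₀, ha₀, hnb⟩ := this
      have := hanc a₀ ha₀
      simp [Hist.anc_base, Hist.anc_step_mem, Hist.anc_step_not_mem, hnb] at this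
    | .step g B t, .step g' B' t' =>
      obtain ⟨a₀, ha₀, hnb⟩ : ∃ a₀ ∈ A.1, a₀ ∉ B.1 := by
        by_contra hc
        push_neg at hc
        exact hpeel ⟨g, B, t, rfl, hc⟩
      obtain ⟨a₁, ha₁, hnb'⟩ : ∃ a₁ ∈ A.1, a₁ ∉ B'.1 := by
        by_contra hc
        push_neg at hc
        exact hpeel' ⟨g', B', t', rfl, hc⟩
      -- anc a₀ h = h, so h is a prefix of h'; similarly h' is a prefix of h
      have e0 : (Hist.step g B t).anc a₀ = (Hist.step g' B' t').anc a₀ := hanc a₀ ha₀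
      have e1 : (Hist.step g B t).anc a₁ = (Hist.step g' B' t').anc a₁ := hanc a₁ ha₁
      rw [show (Hist.step g B t).anc a₀ = Hist.step g B t by simp [Hist.anc_base, Hist.anc_step_mem, Hist.anc_step_not_mem, hnb]] at e0
      rw [show (Hist.step g' B' t').anc a₁ = Hist.step g' B' t' by simp [Hist.anc_base, Hist.anc_step_mem, Hist.anc_step_not_mem, hnb']] at e1
      have p0 : Hist.IsPrefix (Hist.step g B t) (Hist.step g' B' t') := by
        rw [e0]; exact Hist.anc_isPrefix a₀ _
      have p1 : Hist.IsPrefix (Hist.step g' B' t') (Hist.step g B t) := by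
        rw [← e1]; exact Hist.anc_isPrefix a₁ _
      exact heq (Hist.isPrefix_eq_of_depth_le p0 (Hist.isPrefix_depth_le p1))

variable (M)

/-- The unraveled model. -/
def unravel : CMAEModel Agent AP where
  State := {h : Hist Agent M.State // MValid M h}
  state_nonempty := ⟨⟨.base (Classical.choice M.state_nonempty), trivial⟩⟩
  RD A h h' := ∀ a ∈ A.1, h.1.anc a = h'.1.anc a
  RC A := Relation.ReflTransGen
    (fun s t => ∃ A' : Coalition Agent, A'.1 ⊆ A.1 ∧ ∀ a ∈ A'.1, s.1.anc a = t.1.anc a)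
  RC_eq A := rfl
  label h := M.label h.1.last

lemma unravel_genuine : (unravel M).IsGenuine := by
  constructor
  · intro A
    exact ⟨fun h a _ => rfl, fun h12 a ha => (h12 a ha).symm,
      fun h12 h23 a ha => (h12 a ha).trans (h23 a ha)⟩
  · intro A s t
    constructor
    · intro h a ha b hb
      have : b = a := hb
      subst this
      exact h b ha
    · intro h a ha
      exact h a ha a rfl

variable {M}

/-- Projecting `R^C` from the unraveled model to `M`. -/
lemma unravel_rc_proj (hp : M.IsPseudo) {A : Coalition Agent}
    {h h' : (unravel M).State} (hrc : (unravel M).RC A h h') :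
    M.RC A h.1.last h'.1.last := by
  rw [M.RC_eq]
  induction hrc with
  | refl => exact Relation.ReflTransGen.refl
  | @tail x y _ hstep ih =>
    obtain ⟨A', hA', hanc⟩ := hstep
    exact ih.tail ⟨A', hA', rd_of_anc_eq hp (x.1.depth + y.1.depth) A' x.1 y.1 x.2 y.2
      le_rfl hanc⟩

/-- Lifting `R^C` from `M` to the unraveled model. -/
lemma unravel_rc_lift {A : Coalition Agent} {s t : M.State} (hrc : M.RC A s t)
    (h : (unravel M).State) (hls : h.1.last = s) :
    ∃ h' : (unravel M).State, (unravel M).RC A h h' ∧ h'.1.last = t := by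
  rw [M.RC_eq] at hrc
  induction hrc with
  | refl => exact ⟨h, Relation.ReflTransGen.refl, hls⟩
  | @tail x y _ hstep ih =>
    obtain ⟨g, hg, hlg⟩ := ih
    obtain ⟨A', hA', hrd⟩ := hstep
    refine ⟨⟨.step g.1 A' y, g.2, by rw [hlg]; exact hrd⟩, hg.tail ?_, rfl⟩
    exact ⟨A', hA', fun a ha => by simp [Hist.anc_base, Hist.anc_step_mem, Hist.anc_step_not_mem, ha]⟩

/-- Truth lemma. -/
lemma unravel_truth (hp : M.IsPseudo) (φ : Formula Agent AP) :
    ∀ h : (unravel M).State, (unravel M).Sat φ h ↔ M.Sat φ h.1.last := by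
  induction φ with
  | atom p => intro h; exact Iff.rfl
  | neg φ ih => intro h; exact not_congr (ih h)
  | and φ ψ ihφ ihψ => intro h; exact and_congr (ihφ h) (ihψ h)
  | D A φ ih =>
    intro h
    constructor
    · intro hs t hrd
      have hv : MValid M (.step h.1 A t) := ⟨h.2, hrd⟩
      have := hs ⟨.step h.1 A t, hv⟩ (fun a ha => by simp [Hist.anc_base, Hist.anc_step_mem, Hist.anc_step_not_mem, ha])
      exact (ih _).mp this
    · intro hs h' hrd
      exact (ih h').mpr (hs h'.1.last
        (rd_of_anc_eq hp (h.1.depth + h'.1.depth) A h.1 h'.1 h.2 h'.2 le_rfl hrd))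
  | C A φ ih =>
    intro h
    constructor
    · intro hs t hrc
      obtain ⟨h', hrc', hl⟩ := unravel_rc_lift hrc h rfl
      rw [← hl]
      exact (ih h').mp (hs h' hrc')
    · intro hs h' hrc
      exact (ih h').mpr (hs h'.1.last (unravel_rc_proj hp hrc))

end Unravel

/-- `θ` is satisfiable in a CMAEM iff `θ` is satisfiable in a
pseudo-CMAEM. -/
theorem cmaem_sat_iff_pseudo_sat {Agent AP : Type} [Fintype Agent] [Nonempty Agent]
    (θ : Formula Agent AP) :
    SatisfiableInCMAEM Agent AP θ ↔ SatisfiableInPseudo Agent AP θ := by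
  constructor
  · rintro ⟨M, hg, s, hs⟩
    refine ⟨M, ⟨hg.1, fun A B hBA s t hst => ?_⟩, s, hs⟩
    exact (hg.2 B s t).mpr fun a ha => (hg.2 A s t).mp hst a (hBA ha)
  · rintro ⟨M, hp, s, hs⟩
    refine ⟨unravel M, unravel_genuine M, ⟨.base s, trivial⟩, ?_⟩
    exact (unravel_truth hp θ _).mpr hs
end
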